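/- MCE is convex in its second argument: for a density matrix P, symmetric positive definite matrices Q₁,…,Q_m, and nonnegative weights b₁,…,b_m summing to 1, MCE(P, Σⱼ bⱼ Qⱼ) ≤ Σⱼ bⱼ MCE(P, Qⱼ). -/

import Mathlib

open Matrix

/-- The principal matrix logarithm of a symmetric real matrix, via the spectral theorem. -/
noncomputable def matLog {n : ℕ} (A : Matrix (Fin n) (Fin n) ℝ) : Matrix (Fin n) (Fin n) ℝ :=
  if h : A.IsHermitian then h.cfc Real.log else 0

/-- Matrix cross-entropy `MCE(P, Q) = tr(−P log Q + Q)`. -/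
noncomputable def MCE {n : ℕ} (P Q : Matrix (Fin n) (Fin n) ℝ) : ℝ :=
  (-(P * matLog Q) + Q).trace

section Aux

variable {n : ℕ}

/-! ### Scalar lemmas -/

lemma denom_pos' {l s : ℝ} (hl : 0 < l) (h0 : 0 ≤ s) (h1 : s ≤ 1) :
    0 < 1 + s * (l - 1) := by nlinarith [mul_nonneg h0 hl.le]

lemma g_intervalIntegrable {l : ℝ} (hl : 0 < l) :
    IntervalIntegrable (fun s => (l - 1) / (1 + s * (l - 1))) MeasureTheory.volume 0 1 := by
  apply ContinuousOn.intervalIntegrable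
  apply ContinuousOn.div continuousOn_const (by fun_prop)
  intro s hs
  rw [Set.uIcc_of_le (by norm_num)] at hs
  exact (denom_pos' hl hs.1 hs.2).ne'

lemma scalar_log_integral {l : ℝ} (hl : 0 < l) :
    ∫ s in (0:ℝ)..1, (l - 1) / (1 + s * (l - 1)) = Real.log l := by
  have key : ∀ s ∈ Set.uIcc (0:ℝ) 1,
      HasDerivAt (fun t => Real.log (1 + t * (l - 1))) ((l - 1) / (1 + s * (l - 1))) s := by
    intro s hs
    rw [Set.uIcc_of_le (by norm_num)] at hs
    have hpos := denom_pos' hl hs.1 hs.2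
    have h1 : HasDerivAt (fun t : ℝ => 1 + t * (l - 1)) (l - 1) s := by
      simpa using ((hasDerivAt_id s).mul_const (l - 1)).const_add 1
    have := (Real.hasDerivAt_log hpos.ne').comp s h1
    rw [div_eq_inv_mul]; exact this
  have := intervalIntegral.integral_eq_sub_of_hasDerivAt key (g_intervalIntegrable hl)
  simpa using this

/-! ### Quadratic form helpers -/

lemma mulVec_inv_cancel' {A : Matrix (Fin n) (Fin n) ℝ} (hA : A.PosDef) (x : Fin n → ℝ) :
    A *ᵥ (A⁻¹ *ᵥ x) = x := by
  rw [mulVec_mulVec, mul_nonsing_inv _ hA.det_pos.ne'.isUnit, one_mulVec]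

lemma quad_sum {m : ℕ} (c : Fin m → ℝ) (B : Fin m → Matrix (Fin n) (Fin n) ℝ) (x : Fin n → ℝ) :
    x ⬝ᵥ (∑ j, c j • B j) *ᵥ x = ∑ j, c j * (x ⬝ᵥ (B j) *ᵥ x) := by
  have h0 : (∑ j, c j • B j) *ᵥ x = ∑ j, (c j • B j) *ᵥ x :=
    map_sum (mulVec.addMonoidHomLeft (α := ℝ) x) (fun j => c j • B j) Finset.univ
  rw [h0]
  have h1 : (∑ j, (c j • B j) *ᵥ x) = ∑ j, c j • ((B j) *ᵥ x) :=
    Finset.sum_congr rfl fun j _ => smul_mulVec (c j) (B j) x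
  rw [h1]
  simp only [dotProduct, Finset.sum_apply, Pi.smul_apply, smul_eq_mul, Finset.mul_sum]
  rw [Finset.sum_comm]
  exact Finset.sum_congr rfl fun j _ => Finset.sum_congr rfl fun i _ => by ring

/-- variational lower bound: `2⟨x,y⟩ - ⟨y, A y⟩ ≤ ⟨x, A⁻¹ x⟩` for PD symmetric A. -/
lemma two_dot_sub_le {A : Matrix (Fin n) (Fin n) ℝ} (hA : A.PosDef) (x y : Fin n → ℝ) :
    2 * (x ⬝ᵥ y) - y ⬝ᵥ A *ᵥ y ≤ x ⬝ᵥ A⁻¹ *ᵥ x := by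
  have hz := hA.posSemidef.dotProduct_mulVec_nonneg (A⁻¹ *ᵥ x - y)
  simp only [star_trivial] at hz
  have hAy : ∀ z w : Fin n → ℝ, z ⬝ᵥ A *ᵥ w = (A *ᵥ z) ⬝ᵥ w := by
    intro z w
    rw [dotProduct_mulVec, ← mulVec_transpose]
    congr 1
    exact congrArg (· *ᵥ z) (by rw [← conjTranspose_eq_transpose_of_trivial]; exact hA.isHermitian.eq)
  have expand : (A⁻¹ *ᵥ x - y) ⬝ᵥ A *ᵥ (A⁻¹ *ᵥ x - y)
      = x ⬝ᵥ A⁻¹ *ᵥ x - 2 * (x ⬝ᵥ y) + y ⬝ᵥ A *ᵥ y := by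
    rw [sub_dotProduct, mulVec_sub, dotProduct_sub, dotProduct_sub, mulVec_inv_cancel' hA]
    have h1 : (A⁻¹ *ᵥ x) ⬝ᵥ x = x ⬝ᵥ A⁻¹ *ᵥ x := dotProduct_comm _ _
    have h2 : y ⬝ᵥ x = x ⬝ᵥ y := dotProduct_comm _ _
    have h3 : (A⁻¹ *ᵥ x) ⬝ᵥ A *ᵥ y = x ⬝ᵥ y := by
      rw [hAy, mulVec_inv_cancel' hA]
    ring_nf
    rw [h1, h2, h3]
    ring
  rw [expand] at hz
  linarith

/-- n-ary operator convexity of the inverse (quadratic-form level). -/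
lemma inv_quad_convex {m : ℕ} {A : Fin m → Matrix (Fin n) (Fin n) ℝ} {b : Fin m → ℝ}
    {C : Matrix (Fin n) (Fin n) ℝ} (hA : ∀ j, (A j).PosDef) (hb : ∀ j, 0 ≤ b j)
    (hC : C.PosDef) (hbsum : ∑ j, b j = 1) (hCsum : C = ∑ j, b j • A j) (x : Fin n → ℝ) :
    x ⬝ᵥ C⁻¹ *ᵥ x ≤ ∑ j, b j * (x ⬝ᵥ (A j)⁻¹ *ᵥ x) := by
  set y := C⁻¹ *ᵥ x with hy
  have hbsum' : ∑ j, b j * (2 * (x ⬝ᵥ y) - y ⬝ᵥ (A j) *ᵥ y) ≤ ∑ j, b j * (x ⬝ᵥ (A j)⁻¹ *ᵥ x) :=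
    Finset.sum_le_sum fun j _ => mul_le_mul_of_nonneg_left (two_dot_sub_le (hA j) x y) (hb j)
  refine le_trans (le_of_eq ?_) hbsum'
  have hCy : y ⬝ᵥ C *ᵥ y = ∑ j, b j * (y ⬝ᵥ (A j) *ᵥ y) := by
    rw [hCsum]; exact quad_sum b A y
  have hxy : x ⬝ᵥ y = y ⬝ᵥ C *ᵥ y := by
    rw [hy, mulVec_inv_cancel' hC, dotProduct_comm]
  have hsum2 : ∑ j, b j * (2 * (x ⬝ᵥ y) - y ⬝ᵥ (A j) *ᵥ y)
      = 2 * (x ⬝ᵥ y) * (∑ j, b j) - ∑ j, b j * (y ⬝ᵥ (A j) *ᵥ y) := by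
    rw [Finset.mul_sum, ← Finset.sum_sub_distrib]
    exact Finset.sum_congr rfl fun j _ => by ring
  rw [hsum2, hbsum, ← hCy, ← hxy]
  ring

/-! ### spectral / cfc lemmas -/

lemma quad_cfc {X : Matrix (Fin n) (Fin n) ℝ} (hX : X.IsHermitian) (f : ℝ → ℝ) (x : Fin n → ℝ) :
    x ⬝ᵥ (hX.cfc f) *ᵥ x
      = ∑ i, f (hX.eigenvalues i) *
          ((star (hX.eigenvectorUnitary : Matrix (Fin n) (Fin n) ℝ) *ᵥ x) i)^2 := by
  set U : Matrix (Fin n) (Fin n) ℝ := (hX.eigenvectorUnitary : Matrix (Fin n) (Fin n) ℝ)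
  set y := star U *ᵥ x with hy
  have hUt : Uᵀ = star U := rfl
  rw [Matrix.IsHermitian.cfc, Unitary.conjStarAlgAut_apply]
  rw [← mulVec_mulVec, ← mulVec_mulVec, dotProduct_mulVec, ← mulVec_transpose, hUt]
  simp only [← hy, dotProduct, mulVec_diagonal, Function.comp_apply]
  exact Finset.sum_congr rfl fun i _ => by rw [RCLike.ofReal_real_eq_id]; simp; ring

lemma herm_smul {A : Matrix (Fin n) (Fin n) ℝ} (hA : A.IsHermitian) (c : ℝ) :
    (c • A).IsHermitian := by
  unfold Matrix.IsHermitian at *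
  rw [conjTranspose_smul, hA]
  simp

lemma spec_pos {X : Matrix (Fin n) (Fin n) ℝ} (hX : X.PosDef) :
    ∀ l ∈ spectrum ℝ X, 0 < l := by
  intro l hl
  rw [hX.1.spectrum_real_eq_range_eigenvalues] at hl
  obtain ⟨i, rfl⟩ := hl
  exact hX.eigenvalues_pos i

lemma T_posDef {X : Matrix (Fin n) (Fin n) ℝ} (hX : X.PosDef) {s : ℝ} (h0 : 0 ≤ s) (h1 : s ≤ 1) :
    ((1 - s) • (1 : Matrix (Fin n) (Fin n) ℝ) + s • X).PosDef := by
  refine posDef_iff_dotProduct_mulVec.mpr ⟨(herm_smul isHermitian_one (1-s)).add (herm_smul hX.1 s), fun x hx => ?_⟩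
  have h1v : x ⬝ᵥ ((1:Matrix (Fin n) (Fin n) ℝ) *ᵥ x) = x ⬝ᵥ x := by rw [one_mulVec]
  have hxx : 0 < x ⬝ᵥ x := by
    have := (Matrix.PosDef.one (n := Fin n) (R := ℝ)).dotProduct_mulVec_pos hx
    simpa using this
  simp only [add_mulVec, smul_mulVec, dotProduct_add, dotProduct_smul, smul_eq_mul,
    star_trivial, h1v]
  rcases eq_or_lt_of_le h0 with h | h
  · simp [← h, hxx]
  · have := hX.dotProduct_mulVec_pos hx
    simp only [star_trivial] at this
    nlinarith

/-- cfc of the integrand equals the explicit matrix expression. -/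
lemma cfc_g_eq {X : Matrix (Fin n) (Fin n) ℝ} (hX : X.PosDef) {s : ℝ} (h0 : 0 ≤ s) (h1 : s ≤ 1) :
    hX.1.cfc (fun l => (l - 1) / (1 + s * (l - 1)))
      = (X - 1) * ((1 - s) • (1 : Matrix (Fin n) (Fin n) ℝ) + s • X)⁻¹ := by
  set T : Matrix (Fin n) (Fin n) ℝ := (1 - s) • 1 + s • X with hT
  have hsa : IsSelfAdjoint X := hX.1.isSelfAdjoint
  have hdenom : ∀ l ∈ spectrum ℝ X, 1 + s * (l - 1) ≠ 0 := by
    intro l hl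
    have hlp := spec_pos hX l hl
    nlinarith [mul_nonneg h0 hlp.le]
  have hcont_inv : ContinuousOn (fun l => (1 + s * (l - 1))⁻¹) (spectrum ℝ X) :=
    (by fun_prop : ContinuousOn (fun l : ℝ => 1 + s * (l - 1)) _).inv₀ hdenom
  have hAff : cfc (fun l => 1 + s * (l - 1)) X = T := by
    have heq : (fun l : ℝ => 1 + s * (l - 1)) = fun l => (1 - s) + s * l := by funext l; ring
    rw [heq, cfc_const_add (1 - s) (fun l => s * l) X (by fun_prop) hsa,
      cfc_const_mul s (fun l : ℝ => l) X (by fun_prop), cfc_id' ℝ X hsa,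
      hT, Algebra.algebraMap_eq_smul_one]
  have hmul : cfc (fun l => (1 + s * (l - 1))⁻¹) X * T = 1 := by
    rw [← hAff, ← cfc_mul _ _ X hcont_inv (by fun_prop)]
    rw [cfc_congr (g := fun _ : ℝ => (1:ℝ)) (fun l hl => inv_mul_cancel₀ (hdenom l hl))]
    exact cfc_const_one ℝ X hsa
  have hinv : T⁻¹ = cfc (fun l => (1 + s * (l - 1))⁻¹) X := Matrix.inv_eq_left_inv hmul
  have hsub : cfc (fun l : ℝ => l - 1) X = X - 1 := by
    have heq : (fun l : ℝ => l - 1) = fun l : ℝ => l - (fun _ : ℝ => (1:ℝ)) l := rfl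
    rw [heq, cfc_sub (f := fun l : ℝ => l) (g := fun _ : ℝ => (1:ℝ)) (a := X),
      cfc_id' ℝ X hsa, cfc_const_one ℝ X hsa]
  rw [← hX.1.cfc_eq, hinv, ← hsub, ← cfc_mul _ _ X (by fun_prop) hcont_inv]
  exact cfc_congr fun l hl => div_eq_mul_inv _ _

end Aux

section Key

variable {n m : ℕ}

/-- The integral representation of the log quadratic form. -/
lemma quad_matLog_integral {X : Matrix (Fin n) (Fin n) ℝ} (hX : X.PosDef) (x : Fin n → ℝ) :
    x ⬝ᵥ (hX.1.cfc Real.log) *ᵥ x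
      = ∫ s in (0:ℝ)..1, x ⬝ᵥ (hX.1.cfc (fun l => (l - 1) / (1 + s * (l - 1)))) *ᵥ x := by
  have hrw : (fun s : ℝ => x ⬝ᵥ (hX.1.cfc (fun l => (l - 1) / (1 + s * (l - 1)))) *ᵥ x)
      = fun s : ℝ => ∑ i, (hX.1.eigenvalues i - 1) / (1 + s * (hX.1.eigenvalues i - 1)) *
          ((star (hX.1.eigenvectorUnitary : Matrix (Fin n) (Fin n) ℝ) *ᵥ x) i)^2 :=
    funext fun s => quad_cfc hX.1 _ x
  rw [hrw, quad_cfc hX.1 Real.log x,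
    intervalIntegral.integral_finset_sum (fun i _ =>
      (g_intervalIntegrable (hX.eigenvalues_pos i)).mul_const _)]
  refine Finset.sum_congr rfl fun i _ => ?_
  rw [intervalIntegral.integral_mul_const, scalar_log_integral (hX.eigenvalues_pos i)]

lemma phi_intervalIntegrable {X : Matrix (Fin n) (Fin n) ℝ} (hX : X.PosDef) (x : Fin n → ℝ) :
    IntervalIntegrable
      (fun s : ℝ => x ⬝ᵥ (hX.1.cfc (fun l => (l - 1) / (1 + s * (l - 1)))) *ᵥ x)
      MeasureTheory.volume 0 1 := by
  have hrw : (fun s : ℝ => x ⬝ᵥ (hX.1.cfc (fun l => (l - 1) / (1 + s * (l - 1)))) *ᵥ x)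
      = fun s : ℝ => ∑ i, (hX.1.eigenvalues i - 1) / (1 + s * (hX.1.eigenvalues i - 1)) *
          ((star (hX.1.eigenvectorUnitary : Matrix (Fin n) (Fin n) ℝ) *ᵥ x) i)^2 :=
    funext fun s => quad_cfc hX.1 _ x
  rw [hrw]
  have := IntervalIntegrable.sum (μ := MeasureTheory.volume) (a := (0:ℝ)) (b := 1) Finset.univ
    (f := fun i => fun s : ℝ => (hX.1.eigenvalues i - 1) / (1 + s * (hX.1.eigenvalues i - 1)) *
      ((star (hX.1.eigenvectorUnitary : Matrix (Fin n) (Fin n) ℝ) *ᵥ x) i)^2)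
    (fun i _ => (g_intervalIntegrable (hX.eigenvalues_pos i)).mul_const _)
  rw [show ∀ g : _ → ℝ → ℝ, (∑ i, g i) = fun s => ∑ i, g i s from
    fun g => funext fun s => Finset.sum_apply s _ g] at this
  exact this

/-- pointwise (in `s`) concavity of the integrand's quadratic form. -/
lemma key_pointwise {S : Matrix (Fin n) (Fin n) ℝ} {Q : Fin m → Matrix (Fin n) (Fin n) ℝ}
    {b : Fin m → ℝ} (hQ : ∀ j, (Q j).PosDef) (hb : ∀ j, 0 ≤ b j) (hbsum : ∑ j, b j = 1)
    (hS : S.PosDef) (hSsum : S = ∑ j, b j • Q j) {s : ℝ} (h0 : 0 ≤ s) (h1 : s ≤ 1)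
    (x : Fin n → ℝ) :
    ∑ j, b j * (x ⬝ᵥ ((hQ j).1.cfc (fun l => (l - 1) / (1 + s * (l - 1)))) *ᵥ x)
      ≤ x ⬝ᵥ (hS.1.cfc (fun l => (l - 1) / (1 + s * (l - 1)))) *ᵥ x := by
  -- T X := (1-s) • 1 + s • X
  set T : Matrix (Fin n) (Fin n) ℝ → Matrix (Fin n) (Fin n) ℝ :=
    fun X => (1 - s) • 1 + s • X with hTdef
  have hTsum : T S = ∑ j, b j • T (Q j) := by
    simp only [hTdef, smul_add]
    rw [Finset.sum_add_distrib]
    congr 1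
    · have : ∀ j : Fin m, b j • ((1 - s) • (1 : Matrix (Fin n) (Fin n) ℝ))
          = (b j * (1 - s)) • (1 : Matrix (Fin n) (Fin n) ℝ) := fun j => smul_smul _ _ _
      simp_rw [this, ← Finset.sum_smul, ← Finset.sum_mul, hbsum, one_mul]
    · rw [hSsum, Finset.smul_sum]
      exact Finset.sum_congr rfl fun j _ => (smul_comm _ _ _)
  -- rewrite both sides via cfc_g_eq
  have hrwS : hS.1.cfc (fun l => (l - 1) / (1 + s * (l - 1))) = (S - 1) * (T S)⁻¹ :=
    cfc_g_eq hS h0 h1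
  have hrwQ : ∀ j, (hQ j).1.cfc (fun l => (l - 1) / (1 + s * (l - 1)))
      = (Q j - 1) * (T (Q j))⁻¹ := fun j => cfc_g_eq (hQ j) h0 h1
  rw [hrwS]
  simp_rw [fun j => congrArg (fun M => x ⬝ᵥ M *ᵥ x) (hrwQ j)]
  rcases eq_or_lt_of_le h0 with hs0 | hs0
  -- s = 0 : both sides equal (linear case)
  · subst hs0
    have hT1 : ∀ X : Matrix (Fin n) (Fin n) ℝ, T X = 1 := by
      intro X; simp [hTdef]
    simp only [hT1, inv_one, mul_one]
    have hquad : ∀ X : Matrix (Fin n) (Fin n) ℝ,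
        x ⬝ᵥ (X - 1) *ᵥ x = x ⬝ᵥ X *ᵥ x - x ⬝ᵥ x := by
      intro X
      rw [sub_mulVec, dotProduct_sub, one_mulVec]
    simp_rw [hquad, hSsum, quad_sum b Q x]
    have heq2 : ∑ j, b j * (x ⬝ᵥ (Q j) *ᵥ x - x ⬝ᵥ x)
        = ∑ j, b j * (x ⬝ᵥ (Q j) *ᵥ x) - (∑ j, b j) * (x ⬝ᵥ x) := by
      rw [Finset.sum_mul, ← Finset.sum_sub_distrib]
      exact Finset.sum_congr rfl fun j _ => by ring
    rw [heq2, hbsum, one_mul]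
  -- s > 0
  · have hsne : s ≠ 0 := hs0.ne'
    have hTpd : ∀ {X : Matrix (Fin n) (Fin n) ℝ}, X.PosDef → (T X).PosDef :=
      fun hX => T_posDef hX h0 h1
    have hkey : ∀ (X : Matrix (Fin n) (Fin n) ℝ) (hX : X.PosDef),
        x ⬝ᵥ ((X - 1) * (T X)⁻¹) *ᵥ x = s⁻¹ * (x ⬝ᵥ x - x ⬝ᵥ (T X)⁻¹ *ᵥ x) := by
      intro X hX
      have hsm : s • (X - 1) = T X - 1 := by
        simp only [hTdef, smul_sub, smul_smul]
        rw [sub_smul, one_smul]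
        abel
      have hX1 : X - 1 = s⁻¹ • (T X - 1) := by
        rw [← hsm, smul_smul, inv_mul_cancel₀ hsne, one_smul]
      have hTT : T X * (T X)⁻¹ = 1 := mul_nonsing_inv _ (hTpd hX).det_pos.ne'.isUnit
      rw [hX1, smul_mul_assoc, sub_mul, hTT, one_mul]
      rw [smul_mulVec, dotProduct_smul, smul_eq_mul]
      congr 1
      rw [sub_mulVec, dotProduct_sub, one_mulVec]
    rw [hkey S hS]
    simp_rw [fun j => hkey (Q j) (hQ j)]
    have hconv : x ⬝ᵥ (T S)⁻¹ *ᵥ x ≤ ∑ j, b j * (x ⬝ᵥ (T (Q j))⁻¹ *ᵥ x) :=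
      inv_quad_convex (fun j => hTpd (hQ j)) hb (hTpd hS) hbsum hTsum x
    have hsum : ∑ j, b j * (s⁻¹ * (x ⬝ᵥ x - x ⬝ᵥ (T (Q j))⁻¹ *ᵥ x))
        = s⁻¹ * (x ⬝ᵥ x - ∑ j, b j * (x ⬝ᵥ (T (Q j))⁻¹ *ᵥ x)) := by
      have h1 : ∀ j : Fin m, b j * (s⁻¹ * (x ⬝ᵥ x - x ⬝ᵥ (T (Q j))⁻¹ *ᵥ x))
          = s⁻¹ * (b j * (x ⬝ᵥ x)) - s⁻¹ * (b j * (x ⬝ᵥ (T (Q j))⁻¹ *ᵥ x)) := fun j => by ring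
      simp_rw [h1]
      rw [Finset.sum_sub_distrib, ← Finset.mul_sum, ← Finset.mul_sum, ← Finset.sum_mul, hbsum,
        one_mul, ← mul_sub]
    rw [hsum]
    have hinv : 0 ≤ s⁻¹ := inv_nonneg.mpr h0
    exact mul_le_mul_of_nonneg_left (sub_le_sub_left hconv _) hinv

end Key

section Final

variable {n m : ℕ}

lemma intervalIntegrable_fun_sum {m : ℕ} {f : Fin m → ℝ → ℝ}
    (h : ∀ j, IntervalIntegrable (f j) MeasureTheory.volume 0 1) :
    IntervalIntegrable (fun s => ∑ j, f j s) MeasureTheory.volume 0 1 := by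
  have := IntervalIntegrable.sum (μ := MeasureTheory.volume) (a := (0:ℝ)) (b := 1)
    Finset.univ (f := f) (fun j _ => h j)
  rw [show ∀ g : _ → ℝ → ℝ, (∑ i, g i) = fun s => ∑ i, g i s from
    fun g => funext fun s => Finset.sum_apply s _ g] at this
  exact this

/-- Per-vector concavity of the log quadratic form. -/
lemma key_vector {S : Matrix (Fin n) (Fin n) ℝ} {Q : Fin m → Matrix (Fin n) (Fin n) ℝ}
    {b : Fin m → ℝ} (hQ : ∀ j, (Q j).PosDef) (hb : ∀ j, 0 ≤ b j) (hbsum : ∑ j, b j = 1)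
    (hS : S.PosDef) (hSsum : S = ∑ j, b j • Q j) (x : Fin n → ℝ) :
    ∑ j, b j * (x ⬝ᵥ ((hQ j).1.cfc Real.log) *ᵥ x) ≤ x ⬝ᵥ (hS.1.cfc Real.log) *ᵥ x := by
  rw [quad_matLog_integral hS x]
  have hrwj : ∀ j, b j * (x ⬝ᵥ ((hQ j).1.cfc Real.log) *ᵥ x)
      = ∫ s in (0:ℝ)..1,
          b j * (x ⬝ᵥ ((hQ j).1.cfc (fun l => (l - 1) / (1 + s * (l - 1)))) *ᵥ x) := by
    intro j
    rw [quad_matLog_integral (hQ j) x, ← intervalIntegral.integral_const_mul]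
  simp_rw [hrwj]
  rw [← intervalIntegral.integral_finset_sum
    (fun j _ => ((phi_intervalIntegrable (hQ j) x).const_mul (b j)))]
  apply intervalIntegral.integral_mono_on (by norm_num : (0:ℝ) ≤ 1)
  · exact intervalIntegrable_fun_sum
      (fun j => (phi_intervalIntegrable (hQ j) x).const_mul (b j))
  · exact phi_intervalIntegrable hS x
  · intro s hs
    exact key_pointwise hQ hb hbsum hS hSsum hs.1 hs.2 x

/-- trace of product of PSD matrices is nonneg. -/
lemma trace_mul_psd_nonneg {P M : Matrix (Fin n) (Fin n) ℝ}
    (hP : P.PosSemidef) (hM : M.PosSemidef) : 0 ≤ (P * M).trace := by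
  obtain ⟨B, rfl⟩ := by open scoped MatrixOrder in exact CStarAlgebra.nonneg_iff_eq_star_mul_self.mp hP.nonneg
  rw [mul_assoc, trace_mul_comm]
  have h2 : (B * M * Bᴴ).PosSemidef := hM.mul_mul_conjTranspose_same B
  rw [Matrix.trace]
  have hdiag : ∀ i, 0 ≤ (B * M * Bᴴ) i i := by
    intro i
    have := h2.dotProduct_mulVec_nonneg (Pi.single i 1)
    simpa [single_dotProduct, mulVec_single] using this
  exact Finset.sum_nonneg fun i _ => hdiag i

lemma sum_posDef {Q : Fin m → Matrix (Fin n) (Fin n) ℝ} {b : Fin m → ℝ}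
    (hQ : ∀ j, (Q j).PosDef) (hb : ∀ j, 0 ≤ b j) (hbsum : ∑ j, b j = 1) :
    (∑ j, b j • Q j).PosDef := by
  refine posDef_iff_dotProduct_mulVec.mpr ⟨?_, ?_⟩
  · unfold Matrix.IsHermitian
    rw [conjTranspose_sum]
    exact Finset.sum_congr rfl fun j _ => herm_smul (hQ j).1 (b j)
  · intro x hx
    simp only [star_trivial]
    rw [quad_sum b Q x]
    have hex : ∃ j, 0 < b j := by
      by_contra h
      push_neg at h
      have : ∀ j ∈ Finset.univ, b j = 0 := fun j _ => le_antisymm (h j) (hb j)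
      rw [Finset.sum_congr rfl this] at hbsum
      simpa using hbsum
    obtain ⟨j0, hj0⟩ := hex
    refine Finset.sum_pos' (fun j _ => mul_nonneg (hb j) ?_) ⟨j0, Finset.mem_univ j0, ?_⟩
    · have := (hQ j).posSemidef.dotProduct_mulVec_nonneg x
      simpa using this
    · have := (hQ j0).dotProduct_mulVec_pos hx
      simp only [star_trivial] at this
      exact mul_pos hj0 this

lemma matLog_herm {X : Matrix (Fin n) (Fin n) ℝ} (hX : X.IsHermitian) :
    (hX.cfc Real.log).IsHermitian := by
  rw [← hX.cfc_eq]
  exact (cfc_predicate Real.log X : IsSelfAdjoint _)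

end Final

lemma matLog_eq {n : ℕ} {A : Matrix (Fin n) (Fin n) ℝ} (hA : A.IsHermitian) :
    matLog A = hA.cfc Real.log := dif_pos hA

/-- MCE is convex in its second argument: for a density matrix `P`,
symmetric positive definite matrices `Q₁,…,Q_m` and nonnegative weights `bⱼ` summing to 1,
`MCE(P, Σⱼ bⱼ Qⱼ) ≤ Σⱼ bⱼ MCE(P, Qⱼ)`. -/
theorem mce_convex_second {n m : ℕ} (P : Matrix (Fin n) (Fin n) ℝ)
    (Q : Fin m → Matrix (Fin n) (Fin n) ℝ) (b : Fin m → ℝ)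
    (hPsymm : P.IsSymm) (hPpsd : P.PosSemidef) (hPtr : P.trace = 1)
    (hQ : ∀ j, (Q j).IsSymm ∧ (Q j).PosDef)
    (hb : ∀ j, 0 ≤ b j) (hbsum : ∑ j, b j = 1) :
    MCE P (∑ j, b j • Q j) ≤ ∑ j, b j * MCE P (Q j) := by
  have hQpd : ∀ j, (Q j).PosDef := fun j => (hQ j).2
  set S : Matrix (Fin n) (Fin n) ℝ := ∑ j, b j • Q j with hSdef
  have hSpd : S.PosDef := sum_posDef hQpd hb hbsum
  -- expand MCE
  have hMCE : ∀ (R : Matrix (Fin n) (Fin n) ℝ), MCE P R = R.trace - (P * matLog R).trace := by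
    intro R
    rw [MCE, trace_add, trace_neg]
    ring
  rw [hMCE S]
  have hRHS : ∑ j, b j * MCE P (Q j)
      = ∑ j, b j * (Q j).trace - ∑ j, b j * (P * matLog (Q j)).trace := by
    simp_rw [hMCE]
    rw [← Finset.sum_sub_distrib]
    exact Finset.sum_congr rfl fun j _ => by ring
  rw [hRHS]
  have htrS : S.trace = ∑ j, b j * (Q j).trace := by
    rw [hSdef, trace_sum]
    exact Finset.sum_congr rfl fun j _ => by rw [trace_smul]; simp
  rw [htrS]
  -- reduce to the trace inequality
  have hkey : ∑ j, b j * (P * matLog (Q j)).trace ≤ (P * matLog S).trace := by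
    set M : Matrix (Fin n) (Fin n) ℝ := matLog S - ∑ j, b j • matLog (Q j) with hMdef
    have hMpsd : M.PosSemidef := by
      refine posSemidef_iff_dotProduct_mulVec.mpr ⟨?_, ?_⟩
      · apply Matrix.IsHermitian.sub (matLog_eq hSpd.1 ▸ matLog_herm hSpd.1)
        unfold Matrix.IsHermitian
        rw [conjTranspose_sum]
        exact Finset.sum_congr rfl fun j _ => by
          rw [matLog_eq (hQpd j).1]
          exact herm_smul (matLog_herm (hQpd j).1) (b j)
      · intro x
        simp only [star_trivial, hMdef]
        rw [sub_mulVec, dotProduct_sub, sub_nonneg]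
        have h1 : x ⬝ᵥ (∑ j, b j • matLog (Q j)) *ᵥ x
            = ∑ j, b j * (x ⬝ᵥ (matLog (Q j)) *ᵥ x) := quad_sum _ _ x
        rw [h1]
        have h2 := key_vector hQpd hb hbsum hSpd hSdef x
        simp_rw [fun j => matLog_eq (hQpd j).1, matLog_eq hSpd.1]
        exact h2
    have htr : (P * M).trace
        = (P * matLog S).trace - ∑ j, b j * (P * matLog (Q j)).trace := by
      rw [hMdef, mul_sub, trace_sub, Matrix.mul_sum, trace_sum]
      congr 1
      exact Finset.sum_congr rfl fun j _ => by
        rw [mul_smul_comm, trace_smul]; simp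
    have := trace_mul_psd_nonneg hPpsd hMpsd
    linarith [htr ▸ this]
  linarith [hkey]
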